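/- arXiv:2303.04971 — 3 statements merged into one kernel-verified Lean document; each statement's English description precedes it below -/
import Mathlib

section
/- Let A and E be n×n real matrices. The function t ↦ Tr(exp(A + t·E)) is differentiable at t = 0 with derivative Tr(exp(A)·E); that is, d/dt Tr(exp(A + tE))|_{t=0} = Tr(exp(A)·E). -/
open NormedSpace Finset

section Aux

attribute [local instance] Matrix.linftyOpSemiNormedRing Matrix.linftyOpNormedRing
  Matrix.linftyOpNormedAlgebra Matrix.linftyOpNormedSpace

/-- The norm topology on matrices, used in this section. -/
@[reducible] noncomputable def matNormTop (n : ℕ) : TopologicalSpace (Matrix (Fin n) (Fin n) ℝ) :=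
  (Matrix.linftyOpNormedAddCommGroup (m := Fin n) (n := Fin n) (α := ℝ)).toUniformSpace.toTopologicalSpace

attribute [local instance] matNormTop

variable {n : ℕ}

/-- The trace as a continuous linear map. -/
noncomputable def traceCLM (n : ℕ) : Matrix (Fin n) (Fin n) ℝ →L[ℝ] ℝ :=
  LinearMap.toContinuousLinearMap (Matrix.traceLinearMap (Fin n) ℝ ℝ)

@[simp] lemma traceCLM_apply (M : Matrix (Fin n) (Fin n) ℝ) : traceCLM n M = M.trace := rfl

/-- Trace of right multiplication by `E` as a continuous linear map. -/
noncomputable def traceMulCLM (n : ℕ) (E : Matrix (Fin n) (Fin n) ℝ) :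
    Matrix (Fin n) (Fin n) ℝ →L[ℝ] ℝ :=
  LinearMap.toContinuousLinearMap
    ((Matrix.traceLinearMap (Fin n) ℝ ℝ).comp (LinearMap.mulRight ℝ E))

@[simp] lemma traceMulCLM_apply (E M : Matrix (Fin n) (Fin n) ℝ) :
    traceMulCLM n E M = (M * E).trace := rfl

lemma hasDerivAt_line (A E : Matrix (Fin n) (Fin n) ℝ) (t : ℝ) :
    HasDerivAt (fun s : ℝ => A + s • E) E t := by
  have := ((hasDerivAt_id t).smul_const E).const_add A; rwa [one_smul] at this

lemma hasDerivAt_pow_aux (A E : Matrix (Fin n) (Fin n) ℝ) (k : ℕ) (t : ℝ) :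
    HasDerivAt (fun s : ℝ => (A + s • E) ^ (k + 1))
      (∑ i ∈ Finset.range (k + 1),
        (A + t • E) ^ i * E * (A + t • E) ^ (k - i)) t := by
  induction k with
  | zero => simpa using hasDerivAt_line A E t
  | succ k ih =>
    have h := (hasDerivAt_line A E t).mul ih
    have hfun : (fun s : ℝ => (A + s • E) * (A + s • E) ^ (k + 1))
        = fun s : ℝ => (A + s • E) ^ (k + 2) := by
      funext s; rw [← pow_succ']
    change HasDerivAt (fun s : ℝ => (A + s • E) * (A + s • E) ^ (k + 1)) _ t at h
    rw [hfun] at h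
    convert h using 1
    rw [Finset.sum_range_succ', Finset.mul_sum]
    simp only [pow_zero, one_mul, Nat.succ_sub_succ_eq_sub, Nat.sub_zero]
    rw [add_comm]
    congr 1
    refine Finset.sum_congr rfl fun i hi => ?_
    rw [← mul_assoc, ← mul_assoc, ← pow_succ']

lemma hasDerivAt_trace_pow (A E : Matrix (Fin n) (Fin n) ℝ) (k : ℕ) (t : ℝ) :
    HasDerivAt (fun s : ℝ => ((A + s • E) ^ k).trace)
      ((k : ℝ) * ((A + t • E) ^ (k - 1) * E).trace) t := by
  cases k with
  | zero => simpa using hasDerivAt_const t (1 : Matrix (Fin n) (Fin n) ℝ).trace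
  | succ k =>
    have h := (traceCLM n).hasFDerivAt.comp_hasDerivAt t (hasDerivAt_pow_aux A E k t)
    have htr : traceCLM n (∑ i ∈ Finset.range (k + 1),
        (A + t • E) ^ i * E * (A + t • E) ^ (k - i))
        = ((k + 1 : ℕ) : ℝ) * ((A + t • E) ^ k * E).trace := by
      rw [traceCLM_apply, Matrix.trace_sum]
      have : ∀ i ∈ Finset.range (k + 1),
          ((A + t • E) ^ i * E * (A + t • E) ^ (k - i)).trace
            = ((A + t • E) ^ k * E).trace := by
        intro i hi
        have hik := Finset.mem_range.mp hi
        rw [Matrix.trace_mul_comm, ← mul_assoc, ← pow_add]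
        congr 3
        omega
      rw [Finset.sum_congr rfl this, Finset.sum_const, Finset.card_range, nsmul_eq_mul]
    rw [htr] at h
    exact h

lemma norm_pow_mul_le (X Y : Matrix (Fin n) (Fin n) ℝ) (m : ℕ) :
    ‖X ^ m * Y‖ ≤ ‖X‖ ^ m * ‖Y‖ := by
  induction m with
  | zero => simp
  | succ m ih =>
    calc ‖X ^ (m + 1) * Y‖ = ‖X * (X ^ m * Y)‖ := by rw [pow_succ', mul_assoc]
      _ ≤ ‖X‖ * ‖X ^ m * Y‖ := norm_mul_le _ _
      _ ≤ ‖X‖ * (‖X‖ ^ m * ‖Y‖) := mul_le_mul_of_nonneg_left ih (norm_nonneg X)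
      _ = ‖X‖ ^ (m + 1) * ‖Y‖ := by ring

lemma summable_core (C : ℝ) :
    Summable (fun k : ℕ => (k : ℝ) * C ^ (k - 1) / k.factorial) := by
  refine (summable_nat_add_iff 1).mp ((Real.summable_pow_div_factorial C).congr ?_)
  intro m
  have hm : (((m + 1).factorial : ℕ) : ℝ) = ((m : ℝ) + 1) * (m.factorial : ℝ) := by
    push_cast [Nat.factorial_succ]; ring
  show C ^ m / (m.factorial : ℝ) = ((m + 1 : ℕ) : ℝ) * C ^ (m + 1 - 1) / ((m + 1).factorial : ℝ)
  rw [hm]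
  have h1 : ((m : ℝ) + 1) ≠ 0 := by positivity
  have h2 : (m.factorial : ℝ) ≠ 0 := Nat.cast_ne_zero.mpr m.factorial_ne_zero
  push_cast
  field_simp

/-- The summable uniform bound. -/
noncomputable def ubound (n : ℕ) (A E : Matrix (Fin n) (Fin n) ℝ) : ℕ → ℝ :=
  fun k => ‖traceCLM n‖ * ((k : ℝ) * (‖A‖ + ‖E‖) ^ (k - 1) / k.factorial * ‖E‖)

lemma summable_ubound (A E : Matrix (Fin n) (Fin n) ℝ) : Summable (ubound n A E) :=
  (((summable_core (‖A‖ + ‖E‖)).mul_right ‖E‖).mul_left _)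

lemma norm_deriv_term_le (A E : Matrix (Fin n) (Fin n) ℝ) (k : ℕ) (y : ℝ) (hy : |y| ≤ 1) :
    ‖(k.factorial : ℝ)⁻¹ * ((k : ℝ) * ((A + y • E) ^ (k - 1) * E).trace)‖ ≤ ubound n A E k := by
  set C := ‖A‖ + ‖E‖ with hC
  have hynorm : ‖A + y • E‖ ≤ C := by
    calc ‖A + y • E‖ ≤ ‖A‖ + ‖y • E‖ := norm_add_le _ _
      _ = ‖A‖ + |y| * ‖E‖ := by rw [norm_smul, Real.norm_eq_abs]
      _ ≤ ‖A‖ + 1 * ‖E‖ := by gcongr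
      _ = C := by rw [one_mul]
  have h1 : |((A + y • E) ^ (k - 1) * E).trace| ≤ ‖traceCLM n‖ * (C ^ (k - 1) * ‖E‖) := by
    calc |((A + y • E) ^ (k - 1) * E).trace|
        = ‖traceCLM n ((A + y • E) ^ (k - 1) * E)‖ := by
          rw [traceCLM_apply, Real.norm_eq_abs]
      _ ≤ ‖traceCLM n‖ * ‖(A + y • E) ^ (k - 1) * E‖ := (traceCLM n).le_opNorm _
      _ ≤ ‖traceCLM n‖ * (‖A + y • E‖ ^ (k - 1) * ‖E‖) := by
          have := norm_pow_mul_le (A + y • E) E (k - 1)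
          gcongr
      _ ≤ ‖traceCLM n‖ * (C ^ (k - 1) * ‖E‖) := by gcongr
  calc ‖(k.factorial : ℝ)⁻¹ * ((k : ℝ) * ((A + y • E) ^ (k - 1) * E).trace)‖
      = (k.factorial : ℝ)⁻¹ * ((k : ℝ) * |((A + y • E) ^ (k - 1) * E).trace|) := by
        rw [Real.norm_eq_abs, abs_mul, abs_mul,
          abs_of_nonneg (by positivity : (0:ℝ) ≤ (k.factorial : ℝ)⁻¹),
          abs_of_nonneg (by positivity : (0:ℝ) ≤ (k : ℝ))]
    _ ≤ (k.factorial : ℝ)⁻¹ * ((k : ℝ) * (‖traceCLM n‖ * (C ^ (k - 1) * ‖E‖))) := by gcongr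
    _ = ubound n A E k := by simp only [ubound, ← hC]; ring

/-- Key lemma: derivative of the trace of the exponential series. -/
lemma key_hasDerivAt (A E : Matrix (Fin n) (Fin n) ℝ) :
    HasDerivAt (fun t : ℝ => ∑' k : ℕ, ((k.factorial : ℝ))⁻¹ * ((A + t • E) ^ k).trace)
      (∑' k : ℕ, ((k.factorial : ℝ))⁻¹ *
        ((k : ℝ) * ((A + (0 : ℝ) • E) ^ (k - 1) * E).trace)) 0 := by
  have hsum0 : Summable fun k : ℕ =>
      ((k.factorial : ℝ))⁻¹ * ((A + (0 : ℝ) • E) ^ k).trace := by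
    refine ((expSeries_summable' (𝕂 := ℝ) (A + (0 : ℝ) • E)).map (traceCLM n)
      (traceCLM n).continuous).congr fun k => ?_
    simp [Matrix.trace_smul, smul_eq_mul]
  refine hasDerivAt_tsum_of_isPreconnected (summable_ubound A E)
    (Metric.isOpen_ball (x := (0:ℝ)) (ε := 1)) (convex_ball (0:ℝ) 1).isPreconnected
    (fun k y _ => HasDerivAt.const_mul ((k.factorial : ℝ))⁻¹ (hasDerivAt_trace_pow A E k y))
    (fun k y hy => ?_) (Metric.mem_ball_self one_pos) hsum0 (Metric.mem_ball_self one_pos)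
  exact norm_deriv_term_le A E k y
    (le_of_lt (by simpa [Real.dist_eq] using Metric.mem_ball.mp hy))

lemma tsum_trace_eq (M : Matrix (Fin n) (Fin n) ℝ) :
    ∑' k : ℕ, ((k.factorial : ℝ))⁻¹ * (M ^ k).trace = (exp  M).trace := by
  calc ∑' k : ℕ, ((k.factorial : ℝ))⁻¹ * (M ^ k).trace
      = ∑' k : ℕ, traceCLM n (((k.factorial : ℝ))⁻¹ • M ^ k) := by
        refine tsum_congr fun k => ?_
        simp [Matrix.trace_smul, smul_eq_mul]
    _ = traceCLM n (∑' k : ℕ, ((k.factorial : ℝ))⁻¹ • M ^ k) :=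
        ((traceCLM n).map_tsum (expSeries_summable' (𝕂 := ℝ) M)).symm
    _ = (exp  M).trace := by
        have hM : exp  M = ∑' k : ℕ, ((k.factorial : ℝ))⁻¹ • M ^ k := by
          rw [exp_eq_tsum (𝕂 := ℝ)]
        rw [hM, traceCLM_apply]

lemma tsum_deriv_eq (A E : Matrix (Fin n) (Fin n) ℝ) :
    ∑' k : ℕ, ((k.factorial : ℝ))⁻¹ * ((k : ℝ) * (A ^ (k - 1) * E).trace)
      = (exp  A * E).trace := by
  have hsumf : Summable fun k : ℕ =>
      ((k.factorial : ℝ))⁻¹ * ((k : ℝ) * (A ^ (k - 1) * E).trace) := by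
    refine Summable.of_norm_bounded (summable_ubound A E) fun k => ?_
    have := norm_deriv_term_le A E k 0 (by norm_num)
    simpa using this
  rw [hsumf.tsum_eq_zero_add]
  have hterm : ∀ m : ℕ,
      (((m + 1).factorial : ℝ))⁻¹ * (((m + 1 : ℕ) : ℝ) * (A ^ (m + 1 - 1) * E).trace)
        = traceMulCLM n E (((m.factorial : ℝ))⁻¹ • A ^ m) := by
    intro m
    rw [traceMulCLM_apply, Matrix.smul_mul, Matrix.trace_smul, smul_eq_mul,
      Nat.add_sub_cancel]
    have hm : (((m + 1).factorial : ℕ) : ℝ) = ((m : ℝ) + 1) * (m.factorial : ℝ) := by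
      push_cast [Nat.factorial_succ]; ring
    rw [hm]
    have h1 : ((m : ℝ) + 1) ≠ 0 := by positivity
    have h2 : (m.factorial : ℝ) ≠ 0 := Nat.cast_ne_zero.mpr m.factorial_ne_zero
    push_cast
    field_simp
  calc ((Nat.factorial 0 : ℝ))⁻¹ * (((0 : ℕ) : ℝ) * (A ^ (0 - 1) * E).trace)
        + ∑' m : ℕ, (((m + 1).factorial : ℝ))⁻¹ *
            (((m + 1 : ℕ) : ℝ) * (A ^ (m + 1 - 1) * E).trace)
      = ∑' m : ℕ, traceMulCLM n E (((m.factorial : ℝ))⁻¹ • A ^ m) := by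
        rw [tsum_congr hterm]; simp
    _ = traceMulCLM n E (∑' m : ℕ, ((m.factorial : ℝ))⁻¹ • A ^ m) :=
        ((traceMulCLM n E).map_tsum (expSeries_summable' (𝕂 := ℝ) A)).symm
    _ = (exp  A * E).trace := by
        have hA : exp  A = ∑' m : ℕ, ((m.factorial : ℝ))⁻¹ • A ^ m := by
          rw [exp_eq_tsum (𝕂 := ℝ)]
        rw [hA]
        rfl

end Aux

/-- For `n × n` real matrices `A` and `E`, the function `t ↦ Tr(exp (A + t • E))` is
differentiable at `t = 0` with derivative `Tr(exp A * E)`. -/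
theorem hasDerivAt_trace_exp {n : ℕ} (A E : Matrix (Fin n) (Fin n) ℝ) :
    HasDerivAt (fun t : ℝ => (NormedSpace.exp  (A + t • E)).trace)
      ((NormedSpace.exp  A * E).trace) 0 := by
  letI : SeminormedRing (Matrix (Fin n) (Fin n) ℝ) := Matrix.linftyOpSemiNormedRing
  letI : NormedRing (Matrix (Fin n) (Fin n) ℝ) := Matrix.linftyOpNormedRing
  letI : NormedAlgebra ℝ (Matrix (Fin n) (Fin n) ℝ) := Matrix.linftyOpNormedAlgebra
  have h := key_hasDerivAt A E
  simp only [tsum_trace_eq] at h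
  simp only [zero_smul, add_zero] at h
  rwa [tsum_deriv_eq] at h
end

section
/- Let M and E be n×n real matrices and let L_exp(M, E) denote the Fréchet derivative of the matrix exponential at M applied to E. Then the matrix exponential of the 2n×2n block upper triangular matrix [[M, E], [0, M]] equals the block matrix [[exp(M), L_exp(M, E)], [0, exp(M)]]. -/
attribute [local instance] Matrix.linftyOpNormedRing Matrix.linftyOpNormedAlgebra

open NormedSpace Matrix
open scoped Nat

namespace ExpFrechetAux

variable {n : ℕ}

/-- The `k`-th "first order" term: `∑_{i+j=k-1} M^i E M^j`. -/
noncomputable def Dk (M E : Matrix (Fin n) (Fin n) ℝ) (k : ℕ) : Matrix (Fin n) (Fin n) ℝ :=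
  ∑ i ∈ Finset.range k, M ^ i * E * M ^ (k - 1 - i)

lemma Dk_zero (M E : Matrix (Fin n) (Fin n) ℝ) : Dk M E 0 = 0 := by simp [Dk]

lemma Dk_succ (M E : Matrix (Fin n) (Fin n) ℝ) (k : ℕ) :
    Dk M E (k + 1) = Dk M E k * M + M ^ k * E := by
  unfold Dk
  rw [Finset.sum_range_succ, Finset.sum_mul]
  congr 1
  · refine Finset.sum_congr rfl fun i hi => ?_
    have hik : i < k := Finset.mem_range.mp hi
    have h : k + 1 - 1 - i = (k - 1 - i) + 1 := by omega
    rw [h, pow_succ, ← mul_assoc]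
  · simp

lemma Dk_add (M E E' : Matrix (Fin n) (Fin n) ℝ) (k : ℕ) :
    Dk M (E + E') k = Dk M E k + Dk M E' k := by
  simp [Dk, mul_add, add_mul, Finset.sum_add_distrib]

lemma Dk_smul (M : Matrix (Fin n) (Fin n) ℝ) (r : ℝ) (E : Matrix (Fin n) (Fin n) ℝ) (k : ℕ) :
    Dk M (r • E) k = r • Dk M E k := by
  simp [Dk, Matrix.mul_smul, Matrix.smul_mul, Finset.smul_sum]

lemma le_two_pow (k : ℕ) : (k : ℝ) ≤ 2 ^ k := by exact_mod_cast (Nat.lt_two_pow_self (n := k)).le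

lemma sq_le_four_pow (k : ℕ) : (k : ℝ) ^ 2 ≤ 4 ^ k := by
  calc (k : ℝ) ^ 2 ≤ ((2 : ℝ) ^ k) ^ 2 :=
        pow_le_pow_left₀ (Nat.cast_nonneg k) (le_two_pow k) 2
    _ = 4 ^ k := by
        rw [← pow_mul, mul_comm, pow_mul]
        norm_num

lemma summable_k_pow {c : ℝ} (hc : 0 ≤ c) :
    Summable (fun k : ℕ => (k : ℝ) * c ^ k / k !) := by
  refine Summable.of_nonneg_of_le (fun k => by positivity) (fun k => ?_)
    (Real.summable_pow_div_factorial (2 * c))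
  have h : (k : ℝ) * c ^ k ≤ (2 * c) ^ k := by
    rw [mul_pow]
    exact mul_le_mul_of_nonneg_right (le_two_pow k) (by positivity)
  exact div_le_div_of_nonneg_right h (by positivity)

lemma summable_k_sq_pow {c : ℝ} (hc : 0 ≤ c) :
    Summable (fun k : ℕ => (k : ℝ) ^ 2 * c ^ k / k !) := by
  refine Summable.of_nonneg_of_le (fun k => by positivity) (fun k => ?_)
    (Real.summable_pow_div_factorial (4 * c))
  have h : (k : ℝ) ^ 2 * c ^ k ≤ (4 * c) ^ k := by
    rw [mul_pow]
    exact mul_le_mul_of_nonneg_right (sq_le_four_pow k) (by positivity)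
  exact div_le_div_of_nonneg_right h (by positivity)

variable [Nonempty (Fin n)]

lemma norm_Dk_le (M E : Matrix (Fin n) (Fin n) ℝ) {c : ℝ} (hc : 1 ≤ c) (hM : ‖M‖ ≤ c) (k : ℕ) :
    ‖Dk M E k‖ ≤ k * c ^ k * ‖E‖ := by
  have hc0 : 0 ≤ c := zero_le_one.trans hc
  calc ‖Dk M E k‖ ≤ ∑ i ∈ Finset.range k, ‖M ^ i * E * M ^ (k - 1 - i)‖ :=
        norm_sum_le _ _
    _ ≤ ∑ _i ∈ Finset.range k, c ^ k * ‖E‖ := by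
        refine Finset.sum_le_sum fun i hi => ?_
        have hik : i < k := Finset.mem_range.mp hi
        have h1 : ‖M ^ i * E * M ^ (k - 1 - i)‖ ≤ ‖M ^ i‖ * ‖E‖ * ‖M ^ (k - 1 - i)‖ := by
          calc ‖M ^ i * E * M ^ (k - 1 - i)‖ ≤ ‖M ^ i * E‖ * ‖M ^ (k - 1 - i)‖ := norm_mul_le _ _
            _ ≤ ‖M ^ i‖ * ‖E‖ * ‖M ^ (k - 1 - i)‖ := by
                gcongr
                exact norm_mul_le _ _
        refine h1.trans ?_
        have h2 : ‖M ^ i‖ ≤ c ^ i := (norm_pow_le _ _).trans (by gcongr)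
        have h3 : ‖M ^ (k - 1 - i)‖ ≤ c ^ (k - 1 - i) := (norm_pow_le _ _).trans (by gcongr)
        calc ‖M ^ i‖ * ‖E‖ * ‖M ^ (k - 1 - i)‖ ≤ c ^ i * ‖E‖ * c ^ (k - 1 - i) := by
              gcongr <;> positivity
          _ = c ^ (i + (k - 1 - i)) * ‖E‖ := by rw [pow_add]; ring
          _ ≤ c ^ k * ‖E‖ := by
              gcongr
              omega
    _ = k * c ^ k * ‖E‖ := by
        rw [Finset.sum_const, Finset.card_range, nsmul_eq_mul]
        ring

lemma summable_Dk (M E : Matrix (Fin n) (Fin n) ℝ) :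
    Summable (fun k : ℕ => ((k ! : ℝ))⁻¹ • Dk M E k) := by
  have hc1 : (1:ℝ) ≤ ‖M‖ + 1 := by linarith [norm_nonneg M]
  have hM : ‖M‖ ≤ ‖M‖ + 1 := by linarith
  refine Summable.of_norm_bounded
    (((summable_k_pow (by positivity : (0:ℝ) ≤ ‖M‖ + 1)).mul_right ‖E‖)) fun k => ?_
  rw [norm_smul, norm_inv, Real.norm_natCast]
  calc (↑k !)⁻¹ * ‖Dk M E k‖ ≤ (↑k !)⁻¹ * (k * (‖M‖ + 1) ^ k * ‖E‖) := by
        gcongr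
        exact norm_Dk_le M E hc1 hM k
    _ = (k : ℝ) * (‖M‖ + 1) ^ k / ↑k ! * ‖E‖ := by ring

/-- The candidate Fréchet derivative of `exp` at `M`, as a continuous linear map. -/
noncomputable def Lclm (M : Matrix (Fin n) (Fin n) ℝ) :
    Matrix (Fin n) (Fin n) ℝ →L[ℝ] Matrix (Fin n) (Fin n) ℝ :=
  LinearMap.toContinuousLinearMap
    { toFun := fun E => ∑' k : ℕ, ((k ! : ℝ))⁻¹ • Dk M E k
      map_add' := fun E E' => by
        simp only [Dk_add, smul_add]
        exact Summable.tsum_add (summable_Dk M E) (summable_Dk M E')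
      map_smul' := fun r E => by
        simp only [Dk_smul, RingHom.id_apply]
        rw [← ((summable_Dk M E).hasSum.const_smul r).tsum_eq]
        congr 1
        funext k
        rw [smul_comm] }

lemma Lclm_apply (M E : Matrix (Fin n) (Fin n) ℝ) :
    Lclm M E = ∑' k : ℕ, ((k ! : ℝ))⁻¹ • Dk M E k := rfl

omit [Nonempty (Fin n)] in
lemma Rk_succ (M E : Matrix (Fin n) (Fin n) ℝ) (k : ℕ) :
    (M + E) ^ (k + 1) - M ^ (k + 1) - Dk M E (k + 1) =
      ((M + E) ^ k - M ^ k - Dk M E k) * (M + E) + Dk M E k * E := by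
  rw [pow_succ, pow_succ, Dk_succ]
  noncomm_ring

lemma norm_Rk_le (M E : Matrix (Fin n) (Fin n) ℝ) (hE : ‖E‖ ≤ 1) (k : ℕ) :
    ‖(M + E) ^ k - M ^ k - Dk M E k‖ ≤ (k : ℝ) ^ 2 * (‖M‖ + 1) ^ k * ‖E‖ ^ 2 := by
  have hc1 : (1:ℝ) ≤ ‖M‖ + 1 := by linarith [norm_nonneg M]
  have hM : ‖M‖ ≤ ‖M‖ + 1 := by linarith
  have hME : ‖M + E‖ ≤ ‖M‖ + 1 := (norm_add_le _ _).trans (by linarith)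
  set c : ℝ := ‖M‖ + 1 with hc
  induction k with
  | zero => simp [Dk_zero]
  | succ k ih =>
    rw [Rk_succ]
    have hA : (k : ℝ) ^ 2 * c + (k : ℝ) ≤ ((k : ℝ) + 1) ^ 2 * c := by
      nlinarith [mul_le_mul_of_nonneg_left hc1 (by positivity : (0:ℝ) ≤ 2 * (k:ℝ) + 1)]
    calc ‖((M + E) ^ k - M ^ k - Dk M E k) * (M + E) + Dk M E k * E‖
        ≤ ‖(M + E) ^ k - M ^ k - Dk M E k‖ * ‖M + E‖ + ‖Dk M E k‖ * ‖E‖ :=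
          (norm_add_le _ _).trans (add_le_add (norm_mul_le _ _) (norm_mul_le _ _))
      _ ≤ ((k : ℝ) ^ 2 * c ^ k * ‖E‖ ^ 2) * c + ((k : ℝ) * c ^ k * ‖E‖) * ‖E‖ :=
          add_le_add
            (mul_le_mul ih hME (norm_nonneg _) (by positivity))
            (mul_le_mul_of_nonneg_right (norm_Dk_le M E hc1 hM k) (norm_nonneg _))
      _ ≤ ((k : ℝ) ^ 2 * c + (k : ℝ)) * (c ^ k * ‖E‖ ^ 2) := by
          have hE2 : ‖E‖ * ‖E‖ ≤ ‖E‖ ^ 2 := by rw [sq]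
          nlinarith [pow_nonneg (by positivity : (0:ℝ) ≤ c) k, sq_nonneg ‖E‖,
            mul_nonneg (pow_nonneg (by positivity : (0:ℝ) ≤ c) k) (sq_nonneg ‖E‖)]
      _ ≤ (((k : ℝ) + 1) ^ 2 * c) * (c ^ k * ‖E‖ ^ 2) :=
          mul_le_mul_of_nonneg_right hA (by positivity)
      _ = ((k + 1 : ℕ) : ℝ) ^ 2 * c ^ (k + 1) * ‖E‖ ^ 2 := by
          push_cast
          ring

lemma hasFDerivAt_exp (M : Matrix (Fin n) (Fin n) ℝ) :
    HasFDerivAt (exp) (Lclm M) M := by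
  refine hasFDerivAt_iff_isLittleO_nhds_zero.2 ?_
  have hc0 : (0:ℝ) ≤ ‖M‖ + 1 := by linarith [norm_nonneg M]
  have hbig : (fun E => exp (M + E) - exp M - Lclm M E)
      =O[nhds 0] fun E : Matrix (Fin n) (Fin n) ℝ => ‖E‖ ^ 2 := by
    rw [Asymptotics.isBigO_iff]
    refine ⟨∑' k : ℕ, (k : ℝ) ^ 2 * (‖M‖ + 1) ^ k / k !, ?_⟩
    filter_upwards [Metric.ball_mem_nhds (0 : Matrix (Fin n) (Fin n) ℝ) one_pos] with E hEball
    have hE : ‖E‖ ≤ 1 := by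
      rw [Metric.mem_ball, dist_zero_right] at hEball
      exact hEball.le
    have hsum1 := expSeries_summable' (𝕂 := ℝ) (M + E)
    have hsum2 := expSeries_summable' (𝕂 := ℝ) M
    have hsum3 := summable_Dk M E
    have heq : exp (M + E) - exp M - Lclm M E =
        ∑' k : ℕ, ((k ! : ℝ))⁻¹ • ((M + E) ^ k - M ^ k - Dk M E k) := by
      rw [exp_eq_tsum (𝕂 := ℝ)]
      beta_reduce
      erw [Lclm_apply, ← Summable.tsum_sub hsum1 hsum2, ← Summable.tsum_sub (hsum1.sub hsum2) hsum3]
      congr 1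
      funext k
      rw [smul_sub, smul_sub]
    rw [heq]
    have hbound : ∀ k : ℕ, ‖((k ! : ℝ))⁻¹ • ((M + E) ^ k - M ^ k - Dk M E k)‖ ≤
        (k : ℝ) ^ 2 * (‖M‖ + 1) ^ k / k ! * ‖E‖ ^ 2 := by
      intro k
      rw [norm_smul, norm_inv, Real.norm_natCast]
      calc (↑k !)⁻¹ * ‖(M + E) ^ k - M ^ k - Dk M E k‖
          ≤ (↑k !)⁻¹ * ((k : ℝ) ^ 2 * (‖M‖ + 1) ^ k * ‖E‖ ^ 2) := by
            gcongr
            exact norm_Rk_le M E hE k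
        _ = (k : ℝ) ^ 2 * (‖M‖ + 1) ^ k / ↑k ! * ‖E‖ ^ 2 := by ring
    have hgsum : HasSum (fun k : ℕ => (k : ℝ) ^ 2 * (‖M‖ + 1) ^ k / k ! * ‖E‖ ^ 2)
        ((∑' k : ℕ, (k : ℝ) ^ 2 * (‖M‖ + 1) ^ k / k !) * ‖E‖ ^ 2) :=
      (summable_k_sq_pow hc0).hasSum.mul_right _
    calc ‖∑' k : ℕ, ((k ! : ℝ))⁻¹ • ((M + E) ^ k - M ^ k - Dk M E k)‖
        ≤ (∑' k : ℕ, (k : ℝ) ^ 2 * (‖M‖ + 1) ^ k / k !) * ‖E‖ ^ 2 :=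
          tsum_of_norm_bounded hgsum hbound
      _ = (∑' k : ℕ, (k : ℝ) ^ 2 * (‖M‖ + 1) ^ k / k !) * ‖(‖E‖ ^ 2)‖ := by
          rw [Real.norm_of_nonneg (by positivity)]
  exact hbig.trans_isLittleO (Asymptotics.isLittleO_norm_pow_id one_lt_two)

/-! ### Block matrix computation -/

/-- Extraction of the `(1,1)` block as a continuous linear map. -/
noncomputable def tb₁₁ : Matrix (Fin n ⊕ Fin n) (Fin n ⊕ Fin n) ℝ →L[ℝ] Matrix (Fin n) (Fin n) ℝ :=
  LinearMap.toContinuousLinearMap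
    { toFun := Matrix.toBlocks₁₁
      map_add' := fun _ _ => rfl
      map_smul' := fun _ _ => rfl }

/-- Extraction of the `(1,2)` block as a continuous linear map. -/
noncomputable def tb₁₂ : Matrix (Fin n ⊕ Fin n) (Fin n ⊕ Fin n) ℝ →L[ℝ] Matrix (Fin n) (Fin n) ℝ :=
  LinearMap.toContinuousLinearMap
    { toFun := Matrix.toBlocks₁₂
      map_add' := fun _ _ => rfl
      map_smul' := fun _ _ => rfl }

/-- Extraction of the `(2,1)` block as a continuous linear map. -/
noncomputable def tb₂₁ : Matrix (Fin n ⊕ Fin n) (Fin n ⊕ Fin n) ℝ →L[ℝ] Matrix (Fin n) (Fin n) ℝ :=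
  LinearMap.toContinuousLinearMap
    { toFun := Matrix.toBlocks₂₁
      map_add' := fun _ _ => rfl
      map_smul' := fun _ _ => rfl }

/-- Extraction of the `(2,2)` block as a continuous linear map. -/
noncomputable def tb₂₂ : Matrix (Fin n ⊕ Fin n) (Fin n ⊕ Fin n) ℝ →L[ℝ] Matrix (Fin n) (Fin n) ℝ :=
  LinearMap.toContinuousLinearMap
    { toFun := Matrix.toBlocks₂₂
      map_add' := fun _ _ => rfl
      map_smul' := fun _ _ => rfl }

@[simp] lemma tb₁₁_apply (A : Matrix (Fin n ⊕ Fin n) (Fin n ⊕ Fin n) ℝ) :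
    tb₁₁ A = A.toBlocks₁₁ := rfl

@[simp] lemma tb₁₂_apply (A : Matrix (Fin n ⊕ Fin n) (Fin n ⊕ Fin n) ℝ) :
    tb₁₂ A = A.toBlocks₁₂ := rfl

@[simp] lemma tb₂₁_apply (A : Matrix (Fin n ⊕ Fin n) (Fin n ⊕ Fin n) ℝ) :
    tb₂₁ A = A.toBlocks₂₁ := rfl

@[simp] lemma tb₂₂_apply (A : Matrix (Fin n ⊕ Fin n) (Fin n ⊕ Fin n) ℝ) :
    tb₂₂ A = A.toBlocks₂₂ := rfl

omit [Nonempty (Fin n)] in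
lemma pow_fromBlocks (M E : Matrix (Fin n) (Fin n) ℝ) (k : ℕ) :
    (Matrix.fromBlocks M E 0 M) ^ k = Matrix.fromBlocks (M ^ k) (Dk M E k) 0 (M ^ k) := by
  induction k with
  | zero => simp [Dk_zero]
  | succ k ih =>
    rw [pow_succ, ih, Matrix.fromBlocks_multiply, Dk_succ]
    simp [← pow_succ]
    exact add_comm _ _

lemma exp_fromBlocks (M E : Matrix (Fin n) (Fin n) ℝ) :
    exp (Matrix.fromBlocks M E 0 M) =
      Matrix.fromBlocks (exp M) (Lclm M E) 0 (exp M) := by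
  set T := Matrix.fromBlocks M E 0 M with hT
  have hsum : HasSum (fun k : ℕ => ((k ! : ℝ))⁻¹ • T ^ k) (exp T) :=
    exp_series_hasSum_exp' T
  have hM : HasSum (fun k : ℕ => ((k ! : ℝ))⁻¹ • M ^ k) (exp M) :=
    exp_series_hasSum_exp' M
  have h11 : (exp T).toBlocks₁₁ = exp M := by
    have h := hsum.mapL (tb₁₁ (n := n))
    have h' : HasSum (fun k : ℕ => ((k ! : ℝ))⁻¹ • M ^ k) ((exp T).toBlocks₁₁) := by
      simpa [hT, pow_fromBlocks M E, Matrix.fromBlocks_smul] using h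
    exact h'.unique hM
  have h22 : (exp T).toBlocks₂₂ = exp M := by
    have h := hsum.mapL (tb₂₂ (n := n))
    have h' : HasSum (fun k : ℕ => ((k ! : ℝ))⁻¹ • M ^ k) ((exp T).toBlocks₂₂) := by
      simpa [hT, pow_fromBlocks M E, Matrix.fromBlocks_smul] using h
    exact h'.unique hM
  have h21 : (exp T).toBlocks₂₁ = 0 := by
    have h := hsum.mapL (tb₂₁ (n := n))
    have h' : HasSum (fun _ : ℕ => (0 : Matrix (Fin n) (Fin n) ℝ)) ((exp T).toBlocks₂₁) := by
      simpa [hT, pow_fromBlocks M E, Matrix.fromBlocks_smul] using h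
    exact h'.unique hasSum_zero
  have h12 : (exp T).toBlocks₁₂ = Lclm M E := by
    have h := hsum.mapL (tb₁₂ (n := n))
    have h' : HasSum (fun k : ℕ => ((k ! : ℝ))⁻¹ • Dk M E k) ((exp T).toBlocks₁₂) := by
      simpa [hT, pow_fromBlocks M E, Matrix.fromBlocks_smul] using h
    rw [Lclm_apply]
    exact h'.tsum_eq.symm
  conv_lhs => rw [← Matrix.fromBlocks_toBlocks (exp T), h11, h12, h21, h22]

end ExpFrechetAux

/-- For `n × n` real matrices `M` and `E`, with `L_exp(M, E)` the Fréchet derivative of the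
matrix exponential at `M` applied to `E`,
`exp [[M, E], [0, M]] = [[exp M, L_exp(M, E)], [0, exp M]]`. -/
theorem exp_fromBlocks_eq_fromBlocks_exp_frechet {n : ℕ} (M E : Matrix (Fin n) (Fin n) ℝ) :
    NormedSpace.exp (Matrix.fromBlocks M E 0 M) =
      Matrix.fromBlocks (NormedSpace.exp M)
        (fderiv ℝ (NormedSpace.exp :
          Matrix (Fin n) (Fin n) ℝ → Matrix (Fin n) (Fin n) ℝ) M E)
        0 (NormedSpace.exp M) := by
  rcases Nat.eq_zero_or_pos n with hn | hn
  · subst hn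
    ext i j
    exact i.elim (fun a => a.elim0) (fun a => a.elim0)
  · haveI : Nonempty (Fin n) := ⟨⟨0, hn⟩⟩
    rw [(ExpFrechetAux.hasFDerivAt_exp M).fderiv]
    exact ExpFrechetAux.exp_fromBlocks M E
end

section
/- Let A be an n×n real symmetric matrix and fix indices i, j. Let L_exp(A, ·) denote the Fréchet derivative of the matrix exponential at A. Then Tr(L_exp(A, 1_i 1_j^T)) = exp(A)_{ij}, i.e., the trace of the Fréchet derivative of exp at A in the rank-one direction 1_i 1_j^T equals the (i,j) entry of exp(A). -/
attribute [local instance] Matrix.linftyOpNormedRing Matrix.linftyOpNormedAlgebra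

open NormedSpace Finset Nat

variable {n : ℕ}

local notation "Mat" => Matrix (Fin n) (Fin n) ℝ

set_option synthInstance.maxHeartbeats 1000000 in
set_option maxHeartbeats 1000000 in
lemma norm_one_le_mat : ‖(1 : Mat)‖ ≤ 1 := by
  rcases Nat.eq_zero_or_pos n with h | h
  · have h0 : (1 : Mat) = 0 := by
      ext i j
      exact absurd i.isLt (by omega)
    rw [h0, norm_zero]; norm_num
  · have h1 : (1 : Mat) = Matrix.diagonal (fun _ => (1 : ℝ)) := by
      simp [Matrix.diagonal_one]
    rw [h1, Matrix.linfty_opNorm_diagonal]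
    refine (pi_norm_le_iff_of_nonneg zero_le_one).2 fun k => ?_
    simp

lemma norm_pow_le_mat (X : Mat) {R : ℝ} (h1 : 1 ≤ R) (hX : ‖X‖ ≤ R) (k : ℕ) :
    ‖X ^ k‖ ≤ R ^ k := by
  induction k with
  | zero => rw [pow_zero, pow_zero]; exact norm_one_le_mat
  | succ k ih =>
      calc ‖X ^ (k + 1)‖ = ‖X ^ k * X‖ := by rw [pow_succ]
        _ ≤ ‖X ^ k‖ * ‖X‖ := norm_mul_le _ _
        _ ≤ R ^ k * R := by
            have h0 : (0 : ℝ) ≤ ‖X ^ k‖ := norm_nonneg _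
            exact mul_le_mul ih hX (norm_nonneg _) (by positivity)
        _ = R ^ (k + 1) := (pow_succ R k).symm

/-- candidate derivative of `X ^ m`. -/
noncomputable def Dpow (m : ℕ) (X : Mat) :=
  ∑ k ∈ Finset.range m, ContinuousLinearMap.mulLeftRight ℝ Mat (X ^ k) (X ^ (m - 1 - k))

lemma Dpow_apply (m : ℕ) (X E : Mat) :
    Dpow m X E = ∑ k ∈ Finset.range m, X ^ k * E * X ^ (m - 1 - k) := by
  simp [Dpow, ContinuousLinearMap.sum_apply, ContinuousLinearMap.mulLeftRight_apply]

lemma hasFDerivAt_pow_mat (m : ℕ) (X : Mat) :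
    HasFDerivAt (fun Y : Mat => Y ^ m) (Dpow m X) X := by
  induction m with
  | zero =>
      simp only [Dpow, Finset.range_zero, Finset.sum_empty, pow_zero]; exact hasFDerivAt_const (1 : Mat) X
  | succ m ih =>
      have h := (hasFDerivAt_id X).mul' ih
      simp only [id] at h
      have heq : (fun Y : Mat => Y * Y ^ m) = fun Y : Mat => Y ^ (m + 1) := by
        funext Y; exact (pow_succ' Y m).symm
      rw [show (id * fun Y : Mat => Y ^ m) = fun Y : Mat => Y ^ (m + 1) from heq] at h
      refine h.congr_fderiv (Eq.symm ?_)
      ext E : 1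
      simp only [ContinuousLinearMap.add_apply, ContinuousLinearMap.smul_apply,
        ContinuousLinearMap.smulRight_apply, ContinuousLinearMap.coe_id', id_eq,
        smul_eq_mul, Dpow_apply, Finset.mul_sum, Nat.add_sub_cancel]
      rw [Finset.sum_range_succ']
      simp only [pow_zero, one_mul, Nat.sub_zero]
      refine congrArg₂ (· + ·) ?_ rfl
      refine Finset.sum_congr rfl fun k hk => ?_
      rw [Finset.mem_range] at hk
      rw [← mul_assoc, ← mul_assoc]
      have hx : X * X ^ k = X ^ (k + 1) := (pow_succ' X k).symm
      rw [hx]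
      congr 2
      omega

lemma hasFDerivAt_exp_mat (A : Mat) :
    HasFDerivAt (exp : Mat → Mat) (∑' (m : ℕ), ((m ! : ℝ)⁻¹) • Dpow m A) A := by
  set R : ℝ := ‖A‖ + 1 with hR
  have hR1 : 1 ≤ R := by rw [hR]; linarith [norm_nonneg A]
  have hRpos : 0 < R := by linarith
  have hsum : Summable (fun m : ℕ => ((m ! : ℝ)⁻¹) * (m * R ^ (m - 1))) := by
    rw [← summable_nat_add_iff 1]
    refine (Real.summable_pow_div_factorial R).congr fun m => ?_
    rw [Nat.add_sub_cancel]
    push_cast [Nat.factorial_succ]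
    rw [eq_comm]
    have hm : ((m ! : ℝ)) ≠ 0 := by positivity
    field_simp
  have key : ∀ (m : ℕ) (X : Mat), X ∈ Metric.ball (0 : Mat) R →
      ‖((m ! : ℝ)⁻¹) • Dpow m X‖ ≤ ((m ! : ℝ)⁻¹) * (m * R ^ (m - 1)) := by
    intro m X hX
    rw [Metric.mem_ball, _root_.dist_zero_right] at hX
    rw [norm_smul ((m ! : ℝ)⁻¹) (Dpow m X), norm_inv, Real.norm_natCast]
    gcongr
    calc ‖Dpow m X‖
        ≤ ∑ k ∈ Finset.range m,
            ‖ContinuousLinearMap.mulLeftRight ℝ Mat (X ^ k) (X ^ (m - 1 - k))‖ :=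
          norm_sum_le _ _
      _ ≤ ∑ _k ∈ Finset.range m, R ^ (m - 1) := by
          refine Finset.sum_le_sum fun k hk => ?_
          refine (ContinuousLinearMap.opNorm_mulLeftRight_apply_apply_le ℝ Mat _ _).trans ?_
          calc ‖X ^ k‖ * ‖X ^ (m - 1 - k)‖
              ≤ R ^ k * R ^ (m - 1 - k) := by
                exact mul_le_mul (norm_pow_le_mat X hR1 hX.le k)
                  (norm_pow_le_mat X hR1 hX.le _) (norm_nonneg _) (by positivity)
            _ = R ^ (m - 1) := by
                rw [← pow_add]
                congr 1
                rw [Finset.mem_range] at hk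
                omega
      _ = m * R ^ (m - 1) := by simp [Finset.sum_const, mul_comm]
  have hball : A ∈ Metric.ball (0 : Mat) R := by
    rw [Metric.mem_ball, _root_.dist_zero_right, hR]
    linarith
  have hmain := hasFDerivAt_tsum_of_isPreconnected hsum Metric.isOpen_ball
    (convex_ball (0 : Mat) R).isPreconnected
    (fun m X _ => ((hasFDerivAt_pow_mat m X).const_smul ((m ! : ℝ)⁻¹)))
    key hball (expSeries_summable' (𝕂 := ℝ) A) hball
  rw [exp_eq_tsum (𝕂 := ℝ)]
  exact hmain

lemma summable_Dpow (A : Mat) :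
    Summable (fun m : ℕ => ((m ! : ℝ)⁻¹) • Dpow m A) := by
  set R : ℝ := ‖A‖ + 1 with hR
  have hR1 : 1 ≤ R := by rw [hR]; linarith [norm_nonneg A]
  have hsum : Summable (fun m : ℕ => ((m ! : ℝ)⁻¹) * (m * R ^ (m - 1))) := by
    rw [← summable_nat_add_iff 1]
    refine (Real.summable_pow_div_factorial R).congr fun m => ?_
    rw [Nat.add_sub_cancel]
    push_cast [Nat.factorial_succ]
    rw [eq_comm]
    have hm : ((m ! : ℝ)) ≠ 0 := by positivity
    field_simp
  refine Summable.of_norm_bounded hsum fun m => ?_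
  rw [norm_smul ((m ! : ℝ)⁻¹) (Dpow m A), norm_inv, Real.norm_natCast]
  gcongr
  calc ‖Dpow m A‖
      ≤ ∑ k ∈ Finset.range m,
          ‖ContinuousLinearMap.mulLeftRight ℝ Mat (A ^ k) (A ^ (m - 1 - k))‖ :=
        norm_sum_le _ _
    _ ≤ ∑ _k ∈ Finset.range m, R ^ (m - 1) := by
        refine Finset.sum_le_sum fun k hk => ?_
        refine (ContinuousLinearMap.opNorm_mulLeftRight_apply_apply_le ℝ Mat _ _).trans ?_
        have hAR : ‖A‖ ≤ R := by rw [hR]; linarith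
        calc ‖A ^ k‖ * ‖A ^ (m - 1 - k)‖
            ≤ R ^ k * R ^ (m - 1 - k) :=
              mul_le_mul (norm_pow_le_mat A hR1 hAR k)
                (norm_pow_le_mat A hR1 hAR _) (norm_nonneg _) (by positivity)
          _ = R ^ (m - 1) := by
              rw [← pow_add]
              congr 1
              rw [Finset.mem_range] at hk
              omega
    _ = m * R ^ (m - 1) := by simp [Finset.sum_const, mul_comm]

/-- For a real symmetric matrix `A` and indices `i, j`, the trace of the Fréchet
derivative of the matrix exponential at `A` in the rank-one direction `1ᵢ1ⱼᵀ` equals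
the `(i,j)` entry of `exp A`. -/
theorem trace_frechet_exp_stdBasisMatrix {n : ℕ} (A : Matrix (Fin n) (Fin n) ℝ)
    (hA : A.IsSymm) (i j : Fin n) :
    (fderiv ℝ (NormedSpace.exp :
        Matrix (Fin n) (Fin n) ℝ → Matrix (Fin n) (Fin n) ℝ) A
      (Matrix.single i j (1 : ℝ))).trace = NormedSpace.exp A i j := by
  classical
  set E : Matrix (Fin n) (Fin n) ℝ := Matrix.single i j (1 : ℝ) with hE
  rw [show fderiv ℝ exp A E = (∑' (m : ℕ), ((m ! : ℝ)⁻¹) • Dpow m A) E from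
    congrArg (· E) (hasFDerivAt_exp_mat A).fderiv]
  have hsumCLM := summable_Dpow (n := n) A
  -- apply the sum of CLMs to E
  rw [show ((∑' (m : ℕ), ((m ! : ℝ)⁻¹) • Dpow m A) E)
      = ∑' (m : ℕ), (((m ! : ℝ)⁻¹) • Dpow m A) E from
    (ContinuousLinearMap.apply ℝ (Matrix (Fin n) (Fin n) ℝ) E).map_tsum hsumCLM]
  -- trace CLM
  set traceCLM : Matrix (Fin n) (Fin n) ℝ →L[ℝ] ℝ :=
    LinearMap.toContinuousLinearMap (Matrix.traceLinearMap (Fin n) ℝ ℝ) with htc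
  have htrace_apply : ∀ M : Matrix (Fin n) (Fin n) ℝ, traceCLM M = M.trace := fun M => rfl
  have hv : Summable (fun m : ℕ => (((m ! : ℝ)⁻¹) • Dpow m A) E) :=
    hsumCLM.mapL (ContinuousLinearMap.apply ℝ (Matrix (Fin n) (Fin n) ℝ) E)
  rw [show (∑' (m : ℕ), (((m ! : ℝ)⁻¹) • Dpow m A) E).trace
      = ∑' (m : ℕ), ((((m ! : ℝ)⁻¹) • Dpow m A) E).trace from by
    rw [← htrace_apply, traceCLM.map_tsum hv]
    exact tsum_congr fun z => htrace_apply _]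
  -- compute each term's trace
  have hterm : ∀ m : ℕ, ((((m ! : ℝ)⁻¹) • Dpow m A) E).trace
      = ((m ! : ℝ)⁻¹) * (m * (A ^ (m - 1) * E).trace) := by
    intro m
    rw [ContinuousLinearMap.smul_apply, Matrix.trace_smul, smul_eq_mul]
    congr 1
    rw [Dpow_apply, Matrix.trace_sum]
    calc ∑ k ∈ Finset.range m, (A ^ k * E * A ^ (m - 1 - k)).trace
        = ∑ _k ∈ Finset.range m, (A ^ (m - 1) * E).trace := by
          refine Finset.sum_congr rfl fun k hk => ?_
          rw [Finset.mem_range] at hk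
          have hkk : m - 1 - k + k = m - 1 := by omega
          rw [Matrix.trace_mul_cycle, ← pow_add, hkk]
      _ = m * (A ^ (m - 1) * E).trace := by
          simp [Finset.sum_const, nsmul_eq_mul]
  simp_rw [hterm]
  -- summability of the real series
  have hrt : Summable (fun m : ℕ => ((m ! : ℝ)⁻¹) * (m * (A ^ (m - 1) * E).trace)) := by
    refine (hv.mapL traceCLM).congr fun m => ?_
    rw [htrace_apply, hterm]
  rw [hrt.tsum_eq_zero_add]
  simp only [Nat.cast_zero, zero_mul, mul_zero, zero_add]
  -- reindex
  have hsucc : ∀ m : ℕ, (((m + 1)! : ℝ)⁻¹) * ((m + 1 : ℕ) * (A ^ (m + 1 - 1) * E).trace)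
      = ((m ! : ℝ)⁻¹) * (A ^ m * E).trace := by
    intro m
    rw [Nat.add_sub_cancel]
    push_cast [Nat.factorial_succ]
    have hm : ((m ! : ℝ)) ≠ 0 := by positivity
    field_simp
  simp_rw [hsucc]
  -- resum into exp
  set G : Matrix (Fin n) (Fin n) ℝ →L[ℝ] ℝ :=
    LinearMap.toContinuousLinearMap
      ((Matrix.traceLinearMap (Fin n) ℝ ℝ).comp (LinearMap.mulRight ℝ E)) with hG
  have hGapply : ∀ M : Matrix (Fin n) (Fin n) ℝ, G M = (M * E).trace := fun M => rfl
  have h1 : (fun m : ℕ => ((m ! : ℝ)⁻¹) * (A ^ m * E).trace)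
      = fun m : ℕ => G (((m ! : ℝ)⁻¹) • A ^ m) := by
    funext m
    rw [map_smul, hGapply, smul_eq_mul]
  rw [h1, ← G.map_tsum (expSeries_summable' (𝕂 := ℝ) A), hGapply]
  have hexp : exp A = ∑' (m : ℕ), ((m ! : ℝ)⁻¹) • A ^ m := by
    rw [exp_eq_tsum (𝕂 := ℝ)]
  rw [← hexp]
  -- trace of (exp A) * stdBasisMatrix
  have h2 : ((exp A) * E).trace = exp A j i := by
    rw [hE]
    simp [Matrix.trace, Matrix.mul_apply, Matrix.single, Matrix.diag, eq_comm,
      ite_and, Finset.sum_ite_eq, Finset.sum_ite_eq']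
  rw [h2]
  -- symmetry of exp A
  have h3 : exp A.transpose = (exp A).transpose := Matrix.exp_transpose A
  rw [Matrix.IsSymm] at hA
  rw [hA] at h3
  conv_rhs => rw [h3]
  rfl
end
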